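/- Fix Ω₁ > 0 and α > 0, and for ε with 4ε^α < √π Ω₁ let ρ^TF_ε(x) = (Ω₁²/(8ε^{2α})) · max(0, |x|² − R_ε²) with R_ε = √(1 − 4ε^α/(√π Ω₁)). Then for every continuous function F : [0,1] → ℝ, lim_{ε→0} ∫_{B₁} ρ^TF_ε(x) F(|x|) dx = F(1); i.e., ρ^TF_ε converges as a measure to the uniform measure on the unit circle (a radial delta function at r = 1). -/

import Mathlib

open MeasureTheory Real Filter

noncomputable section

/-- Points of the plane. -/
abbrev Pt : Type := EuclideanSpace ℝ (Fin 2)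

/-- The open unit disc. -/
def B1 : Set Pt := Metric.ball 0 1

/-- First partial derivative of a complex-valued function. -/
def pd1 (Ψ : Pt → ℂ) (x : Pt) : ℂ := fderiv ℝ Ψ x (EuclideanSpace.single 0 1)

/-- Second partial derivative of a complex-valued function. -/
def pd2 (Ψ : Pt → ℂ) (x : Pt) : ℂ := fderiv ℝ Ψ x (EuclideanSpace.single 1 1)

/-- Angular momentum operator `L = -i (x₁ ∂₂ - x₂ ∂₁)`. -/
def angMom (Ψ : Pt → ℂ) (x : Pt) : ℂ :=
  -Complex.I * ((x 0 : ℂ) * pd2 Ψ x - (x 1 : ℂ) * pd1 Ψ x)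

/-- The Gross-Pitaevskii energy density `|∇Ψ|² - Ω conj(Ψ) LΨ + |Ψ|⁴/ε²`. -/
def gpDensity (ε Ω : ℝ) (Ψ : Pt → ℂ) (x : Pt) : ℝ :=
  ‖pd1 Ψ x‖ ^ 2 + ‖pd2 Ψ x‖ ^ 2
    - Ω * (starRingEnd ℂ (Ψ x) * angMom Ψ x).re
    + ‖Ψ x‖ ^ 4 / ε ^ 2

/-- The Gross-Pitaevskii functional on the unit disc. -/
def gpEnergy (ε Ω : ℝ) (Ψ : Pt → ℂ) : ℝ := ∫ x in B1, gpDensity ε Ω Ψ x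

/-- Admissible (H¹, normalized) wave functions. -/
def gpAdm (Ψ : Pt → ℂ) : Prop :=
  DifferentiableOn ℝ Ψ B1 ∧
  IntegrableOn (fun x => ‖Ψ x‖ ^ 2) B1 ∧
  IntegrableOn (fun x => ‖pd1 Ψ x‖ ^ 2 + ‖pd2 Ψ x‖ ^ 2) B1 ∧
  IntegrableOn (fun x => ‖Ψ x‖ ^ 4) B1 ∧
  IntegrableOn (fun x => (starRingEnd ℂ (Ψ x) * angMom Ψ x).re) B1 ∧
  (∫ x in B1, ‖Ψ x‖ ^ 2) = 1

/-- The GP ground-state energy: infimum of the functional over normalized functions. -/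
def gpGround (ε Ω : ℝ) : ℝ := sInf {E | ∃ Ψ : Pt → ℂ, gpAdm Ψ ∧ E = gpEnergy ε Ω Ψ}

/-- A GP minimizer: a normalized admissible function attaining the infimum. -/
def IsGPMinimizer (ε Ω : ℝ) (Ψ : Pt → ℂ) : Prop :=
  gpAdm Ψ ∧ gpEnergy ε Ω Ψ = gpGround ε Ω

/-- The Thomas-Fermi functional. -/
def tfEnergy (Ω₀ : ℝ) (ρ : Pt → ℝ) : ℝ :=
  ∫ x in B1, ((ρ x) ^ 2 - Ω₀ ^ 2 * ‖x‖ ^ 2 * ρ x / 4)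

/-- Admissible TF densities: nonnegative, in L²(B₁), of total mass one. -/
def tfAdm (ρ : Pt → ℝ) : Prop :=
  IntegrableOn ρ B1 ∧ IntegrableOn (fun x => (ρ x) ^ 2) B1 ∧
  (∀ᵐ x ∂(volume.restrict B1), 0 ≤ ρ x) ∧ (∫ x in B1, ρ x) = 1

/-- The TF ground-state energy. -/
def tfGround (Ω₀ : ℝ) : ℝ := sInf {E | ∃ ρ : Pt → ℝ, tfAdm ρ ∧ E = tfEnergy Ω₀ ρ}

/-- Radius of the TF "hole". -/
def R0 (Ω₀ : ℝ) : ℝ := Real.sqrt (1 - 4 / (Real.sqrt π * Ω₀))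

/-- The TF minimizer. -/
def rhoTF (Ω₀ : ℝ) (x : Pt) : ℝ :=
  if Ω₀ ≤ 4 / Real.sqrt π then 1 / π - Ω₀ ^ 2 / 16 * (1 - 2 * ‖x‖ ^ 2)
  else max 0 (Ω₀ ^ 2 / 8 * (‖x‖ ^ 2 - 1) + Ω₀ / (2 * Real.sqrt π))

/-- Inner radius of the support of the TF minimizer in the rapid-rotation regime. -/
def Reps (Ω₁ α ε : ℝ) : ℝ := Real.sqrt (1 - 4 * ε ^ α / (Real.sqrt π * Ω₁))

/-- The TF minimizer in the rapid-rotation regime. -/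
def rhoTFeps (Ω₁ α ε : ℝ) (x : Pt) : ℝ :=
  Ω₁ ^ 2 / (8 * ε ^ (2 * α)) * max 0 (‖x‖ ^ 2 - (Reps Ω₁ α ε) ^ 2)

/-- The TF functional of the rapid-rotation regime. -/
def tfEpsEnergy (Ω₁ α ε : ℝ) (ρ : Pt → ℝ) : ℝ :=
  ε ^ (2 * α) * ∫ x in B1, ((ρ x) ^ 2 - Ω₁ ^ 2 * ‖x‖ ^ 2 * ρ x / (4 * ε ^ (2 * α)))


lemma vol_B1 : (volume (Metric.ball (0:Pt) 1)).toReal = π := by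
  rw [EuclideanSpace.volume_ball]
  norm_num
  rw [Real.sq_sqrt pi_nonneg]

lemma polar (g : ℝ → ℝ) :
    ∫ x in B1, g ‖x‖ = 2 * π * ∫ r in Set.Ioo (0:ℝ) 1, r * g r := by
  have h1 : ∫ x in B1, g ‖x‖ = ∫ x : Pt, (Set.Iio (1:ℝ)).indicator g ‖x‖ := by
    unfold B1
    rw [← integral_indicator measurableSet_ball]
    congr 1
    funext x
    by_cases hx : ‖x‖ < 1
    · simp [Set.indicator, Metric.mem_ball, dist_zero_right, Set.mem_Iio, hx]
    · simp [Set.indicator, Metric.mem_ball, dist_zero_right, Set.mem_Iio, hx]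
  rw [h1, integral_fun_norm_addHaar volume ((Set.Iio (1:ℝ)).indicator g)]
  rw [finrank_euclideanSpace_fin]
  have h2 : ∀ y : ℝ, y ^ (2 - 1) • (Set.Iio (1:ℝ)).indicator g y
      = (Set.Iio (1:ℝ)).indicator (fun r => r * g r) y := by
    intro y
    by_cases hy : y ∈ Set.Iio (1:ℝ) <;> simp [Set.indicator, hy]
  rw [integral_congr_ae (Filter.Eventually.of_forall h2)]
  rw [setIntegral_indicator measurableSet_Iio, Set.Ioi_inter_Iio]
  rw [show volume.real (Metric.ball (0:Pt) 1) = π from vol_B1]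
  simp [smul_eq_mul]
  ring

lemma Ioo_int (R : ℝ) (hR0 : 0 ≤ R) (hR1 : R ≤ 1) :
    ∫ r in Set.Ioo (0:ℝ) 1, r * max 0 (r ^ 2 - R ^ 2) = (1 - R ^ 2) ^ 2 / 4 := by
  have hcont : Continuous fun r : ℝ => r * max 0 (r ^ 2 - R ^ 2) := by
    apply continuous_id.mul
    exact continuous_const.max (by continuity)
  rw [← integral_Ioc_eq_integral_Ioo, ← intervalIntegral.integral_of_le zero_le_one]
  rw [← intervalIntegral.integral_add_adjacent_intervals (b := R)
    (hcont.intervalIntegrable _ _) (hcont.intervalIntegrable _ _)]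
  have e1 : ∫ r in (0:ℝ)..R, r * max 0 (r ^ 2 - R ^ 2) = 0 := by
    rw [intervalIntegral.integral_congr (g := fun _ => (0:ℝ))]
    · simp
    · intro r hr
      rw [Set.uIcc_of_le hR0] at hr
      have h1 : max 0 (r ^ 2 - R ^ 2) = 0 := max_eq_left (by nlinarith [hr.1, hr.2])
      simp [h1]
  have e2 : ∫ r in R..1, r * max 0 (r ^ 2 - R ^ 2)
      = ∫ r in R..1, (r ^ 3 - R ^ 2 * r) := by
    apply intervalIntegral.integral_congr
    intro r hr
    rw [Set.uIcc_of_le hR1] at hr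
    have h1 : max 0 (r ^ 2 - R ^ 2) = r ^ 2 - R ^ 2 := max_eq_right (by nlinarith [hr.1, hr.2])
    simp [h1]; ring
  rw [e1, e2, intervalIntegral.integral_sub ((continuous_pow 3).intervalIntegrable _ _)
    ((by fun_prop : Continuous fun r : ℝ => R ^ 2 * r).intervalIntegrable _ _),
    intervalIntegral.integral_const_mul, integral_pow, integral_id]
  ring

lemma mass_one (Ω₁ α ε : ℝ) (hΩ : 0 < Ω₁) (hε : 0 < ε)
    (hδ : 4 * ε ^ α / (Real.sqrt π * Ω₁) ≤ 1) :
    ∫ x in B1, rhoTFeps Ω₁ α ε x = 1 := by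
  set δ := 4 * ε ^ α / (Real.sqrt π * Ω₁) with hδdef
  have hπ : (0:ℝ) < Real.sqrt π := Real.sqrt_pos.2 pi_pos
  have hA : (0:ℝ) < ε ^ α := Real.rpow_pos_of_pos hε α
  have hδ0 : 0 < δ := by positivity
  have hR2 : (Reps Ω₁ α ε) ^ 2 = 1 - δ := Real.sq_sqrt (by linarith)
  set R := Reps Ω₁ α ε with hRdef
  set c := Ω₁ ^ 2 / (8 * ε ^ (2 * α)) with hcdef
  have key : ∫ x in B1, rhoTFeps Ω₁ α ε x
      = 2 * π * ∫ r in Set.Ioo (0:ℝ) 1, r * (c * max 0 (r ^ 2 - R ^ 2)) :=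
    polar (fun r => c * max 0 (r ^ 2 - R ^ 2))
  rw [key]
  have h3 : ∫ r in Set.Ioo (0:ℝ) 1, r * (c * max 0 (r ^ 2 - R ^ 2))
      = c * ∫ r in Set.Ioo (0:ℝ) 1, r * max 0 (r ^ 2 - R ^ 2) := by
    rw [← integral_const_mul]
    congr 1; funext r; ring
  rw [h3, Ioo_int R (Real.sqrt_nonneg _) (Real.sqrt_le_one.2 (by linarith)), hR2]
  have hε2 : ε ^ (2 * α) = (ε ^ α) ^ 2 := by
    rw [mul_comm, Real.rpow_mul hε.le, Real.rpow_two]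
  have hspi : Real.sqrt π ^ 2 = π := Real.sq_sqrt pi_nonneg
  rw [hcdef, hδdef, hε2]
  field_simp
  rw [hspi]; ring

theorem stmt16 (Ω₁ α : ℝ) (hΩ : 0 < Ω₁) (hα : 0 < α)
    (F : ℝ → ℝ) (hF : ContinuousOn F (Set.Icc 0 1)) :
    Tendsto (fun ε => ∫ x in B1, rhoTFeps Ω₁ α ε x * F ‖x‖)
      (nhdsWithin 0 (Set.Ioi 0)) (nhds (F 1)) := by
  rw [Metric.tendsto_nhds]
  intro η hη
  have hc : ContinuousWithinAt F (Set.Icc 0 1) 1 := hF 1 (by norm_num)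
  obtain ⟨δ', hδ'0, hδ'⟩ := Metric.continuousWithinAt_iff.1 hc (η / 2) (by linarith)
  have hπ : (0:ℝ) < Real.sqrt π := Real.sqrt_pos.2 pi_pos
  -- eventual smallness of δ ε
  have ht : Tendsto (fun ε : ℝ => 4 * ε ^ α / (Real.sqrt π * Ω₁))
      (nhdsWithin 0 (Set.Ioi 0)) (nhds 0) := by
    have h0 : Tendsto (fun ε : ℝ => ε ^ α) (nhds 0) (nhds ((0:ℝ) ^ α)) :=
      (Real.continuousAt_rpow_const 0 α (Or.inr hα.le)).tendsto
    rw [Real.zero_rpow hα.ne'] at h0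
    have := (h0.const_mul 4).div_const (Real.sqrt π * Ω₁)
    simpa using this.mono_left nhdsWithin_le_nhds
  have hev : ∀ᶠ ε in nhdsWithin 0 (Set.Ioi 0),
      4 * ε ^ α / (Real.sqrt π * Ω₁) < min δ' 1 := by
    exact ht.eventually (eventually_lt_nhds (lt_min hδ'0 one_pos))
  filter_upwards [hev, self_mem_nhdsWithin] with ε hsmall hεpos
  have hε : (0:ℝ) < ε := hεpos
  set δ := 4 * ε ^ α / (Real.sqrt π * Ω₁) with hδdef
  have hA : (0:ℝ) < ε ^ α := Real.rpow_pos_of_pos hε α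
  have hδ0 : 0 < δ := by positivity
  have hδ1 : δ ≤ 1 := le_of_lt (lt_of_lt_of_le hsmall (min_le_right _ _))
  have hδδ' : δ < δ' := lt_of_lt_of_le hsmall (min_le_left _ _)
  have hmass : ∫ x in B1, rhoTFeps Ω₁ α ε x = 1 := mass_one Ω₁ α ε hΩ hε hδ1
  set R := Reps Ω₁ α ε with hRdef
  have hR2 : R ^ 2 = 1 - δ := Real.sq_sqrt (by linarith)
  have hR0 : 0 ≤ R := Real.sqrt_nonneg _
  have hR1 : R ≤ 1 := Real.sqrt_le_one.2 (by linarith)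
  have hRlow : 1 - δ ≤ R := by nlinarith [hR2, hR0, hR1]
  set c := Ω₁ ^ 2 / (8 * ε ^ (2 * α)) with hcdef
  have hc0 : 0 < c := by
    have : (0:ℝ) < ε ^ (2 * α) := Real.rpow_pos_of_pos hε _
    positivity
  have hρ_eq : ∀ x : Pt, rhoTFeps Ω₁ α ε x = c * max 0 (‖x‖ ^ 2 - R ^ 2) := fun x => rfl
  have hρ_nonneg : ∀ x : Pt, 0 ≤ rhoTFeps Ω₁ α ε x := fun x =>
    mul_nonneg hc0.le (le_max_left _ _)
  -- continuity / integrability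
  have hρcont : Continuous (rhoTFeps Ω₁ α ε) := by
    unfold rhoTFeps
    exact continuous_const.mul (continuous_const.max (((continuous_norm (E := Pt)).pow 2).sub continuous_const))
  have hρint : IntegrableOn (rhoTFeps Ω₁ α ε) B1 := by
    exact (hρcont.continuousOn.integrableOn_compact
      (isCompact_closedBall (0:Pt) 1)).mono_set Metric.ball_subset_closedBall
  have hmaps : ∀ x : Pt, x ∈ B1 → ‖x‖ ∈ Set.Icc (0:ℝ) 1 := by
    intro x hx
    have : ‖x‖ < 1 := by simpa [B1, dist_zero_right] using hx
    exact ⟨norm_nonneg x, this.le⟩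
  have hFc : ContinuousOn (fun x : Pt => F ‖x‖) B1 :=
    hF.comp continuous_norm.continuousOn hmaps
  obtain ⟨Cf, hCf⟩ := isCompact_Icc.exists_bound_of_continuousOn hF
  have hCf0 : 0 ≤ Cf := le_trans (norm_nonneg (F 1)) (hCf 1 (by norm_num))
  have hρbd : ∀ x : Pt, x ∈ B1 → rhoTFeps Ω₁ α ε x ≤ c := by
    intro x hx
    rw [hρ_eq]
    have h1 : ‖x‖ < 1 := by simpa [B1, dist_zero_right] using hx
    have : max 0 (‖x‖ ^ 2 - R ^ 2) ≤ 1 := by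
      apply max_le zero_le_one
      nlinarith [norm_nonneg x, hR0]
    nlinarith
  have hFint : IntegrableOn (fun x : Pt => rhoTFeps Ω₁ α ε x * F ‖x‖) B1 := by
    refine ⟨((hρcont.continuousOn.mul hFc).aestronglyMeasurable measurableSet_ball), ?_⟩
    apply HasFiniteIntegral.restrict_of_bounded (C := c * Cf)
      (measure_ball_lt_top (x := (0:Pt)) (r := 1))
    filter_upwards [ae_restrict_mem measurableSet_ball] with x hx
    have h1 := hρbd x hx
    have h2 := hCf ‖x‖ (hmaps x hx)
    have h3 := hρ_nonneg x
    calc ‖rhoTFeps Ω₁ α ε x * F ‖x‖‖ = rhoTFeps Ω₁ α ε x * ‖F ‖x‖‖ := by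
          rw [norm_mul, Real.norm_of_nonneg h3]
      _ ≤ c * Cf := mul_le_mul h1 h2 (norm_nonneg _) hc0.le
  -- the key bound
  have hdiff : (∫ x in B1, rhoTFeps Ω₁ α ε x * F ‖x‖) - F 1
      = ∫ x in B1, rhoTFeps Ω₁ α ε x * (F ‖x‖ - F 1) := by
    have : ∫ x in B1, rhoTFeps Ω₁ α ε x * (F ‖x‖ - F 1)
        = (∫ x in B1, rhoTFeps Ω₁ α ε x * F ‖x‖)
          - ∫ x in B1, F 1 * rhoTFeps Ω₁ α ε x := by
      rw [← integral_sub hFint (hρint.const_mul (F 1))]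
      congr 1; funext x; ring
    rw [this, integral_const_mul, hmass, mul_one]
  have hbound : ∀ᵐ x ∂(volume.restrict B1),
      ‖rhoTFeps Ω₁ α ε x * (F ‖x‖ - F 1)‖ ≤ η / 2 * rhoTFeps Ω₁ α ε x := by
    filter_upwards [ae_restrict_mem measurableSet_ball] with x hx
    have h1 : ‖x‖ < 1 := by simpa [B1, dist_zero_right] using hx
    by_cases hz : max 0 (‖x‖ ^ 2 - R ^ 2) = 0
    · rw [hρ_eq, hz, mul_zero]
      simp
    · have hpos : R ^ 2 < ‖x‖ ^ 2 := by
        rcases max_cases 0 (‖x‖ ^ 2 - R ^ 2) with ⟨h, h'⟩ | ⟨h, h'⟩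
        · exact absurd h hz
        · linarith
      have hxR : R ≤ ‖x‖ := by nlinarith [norm_nonneg x, hR0]
      have hdist : dist ‖x‖ 1 < δ' := by
        rw [Real.dist_eq, abs_of_nonpos (by linarith)]
        have : 1 - δ ≤ ‖x‖ := le_trans hRlow hxR
        linarith
      have hFsmall : dist (F ‖x‖) (F 1) < η / 2 := hδ' (hmaps x hx) hdist
      rw [Real.dist_eq] at hFsmall
      rw [norm_mul, Real.norm_of_nonneg (hρ_nonneg x), Real.norm_eq_abs, mul_comm]
      exact mul_le_mul_of_nonneg_right hFsmall.le (hρ_nonneg x)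
  have hest : ‖(∫ x in B1, rhoTFeps Ω₁ α ε x * F ‖x‖) - F 1‖ ≤ η / 2 := by
    rw [hdiff]
    calc ‖∫ x in B1, rhoTFeps Ω₁ α ε x * (F ‖x‖ - F 1)‖
        ≤ ∫ x in B1, η / 2 * rhoTFeps Ω₁ α ε x :=
          norm_integral_le_of_norm_le (hρint.const_mul (η / 2)) hbound
      _ = η / 2 := by rw [integral_const_mul, hmass, mul_one]
  rw [Real.dist_eq]
  calc |(∫ x in B1, rhoTFeps Ω₁ α ε x * F ‖x‖) - F 1| ≤ η / 2 := hest
    _ < η := by linarith
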